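/- The bound φ̄ ≤ 2(φ−1) of the Lemma is tight for pyramids with the basis as special face: let S be a finite subset of ℝ^d, let a ∈ ℝ^d with a ∉ affineSpan ℝ S, and let Q = convexHull ℝ (insert a S) be the pyramid with apex a over the base B = convexHull ℝ S. Then the number of exposed faces of Q contained in B equals the number of exposed faces of Q not contained in B: Set.ncard {G | IsExposed ℝ Q G ∧ G ⊆ B} = Set.ncard {G | IsExposed ℝ Q G ∧ ¬ G ⊆ B}. -/

import Mathlib

open Set

namespace Stmt2Aux

variable {d : ℕ} {S : Set (EuclideanSpace ℝ (Fin d))} {a : EuclideanSpace ℝ (Fin d)}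
  {Q B : Set (EuclideanSpace ℝ (Fin d))} {ℓ : EuclideanSpace ℝ (Fin d) →L[ℝ] ℝ} {c : ℝ}

lemma exists_functional (S : Set (EuclideanSpace ℝ (Fin d))) (hSne : S.Nonempty)
    (a : EuclideanSpace ℝ (Fin d)) (ha : a ∉ affineSpan ℝ S) :
    ∃ (ℓ : EuclideanSpace ℝ (Fin d) →L[ℝ] ℝ) (c : ℝ),
      (∀ x ∈ (affineSpan ℝ S : Set (EuclideanSpace ℝ (Fin d))), ℓ x = c) ∧ c < ℓ a := by
  obtain ⟨s₀, hs₀⟩ := hSne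
  have hs₀' : s₀ ∈ affineSpan ℝ S := subset_affineSpan ℝ S hs₀
  set V := (affineSpan ℝ S).direction
  set p : EuclideanSpace ℝ (Fin d) :=
    (V.orthogonalProjectionOnto (a - s₀) : EuclideanSpace ℝ (Fin d)) with hp
  set v : EuclideanSpace ℝ (Fin d) := (a - s₀) - p with hv
  have hvV : v ∈ Vᗮ := V.sub_starProjection_mem_orthogonal _
  have hvne : v ≠ 0 := by
    intro h
    apply ha
    have : a - s₀ ∈ V := by
      rw [sub_eq_zero] at h
      rw [h]; exact (V.orthogonalProjectionOnto (a - s₀)).2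
    have := AffineSubspace.vadd_mem_of_mem_direction this hs₀'
    simpa using this
  refine ⟨innerSL ℝ v, inner ℝ v s₀, fun x hx => ?_, ?_⟩
  · have hxV : x - s₀ ∈ V := AffineSubspace.vsub_mem_direction hx hs₀'
    have h0 : inner ℝ (x - s₀) v = (0:ℝ) := hvV _ hxV
    have h0' : inner ℝ v (x - s₀) = (0:ℝ) := by rwa [real_inner_comm]
    rw [inner_sub_right] at h0'
    simp only [innerSL_apply_apply]
    linarith
  · simp only [innerSL_apply_apply]
    have hpV : p ∈ V := (V.orthogonalProjectionOnto (a - s₀)).2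
    have h0 : inner ℝ p v = (0:ℝ) := hvV _ hpV
    have h0' : inner ℝ v p = (0:ℝ) := by rwa [real_inner_comm]
    have h1 : inner ℝ v (a - s₀) = (‖v‖:ℝ)^2 := by
      have : a - s₀ = v + p := by rw [hv]; abel
      rw [this, inner_add_right, h0', real_inner_self_eq_norm_sq]
      ring
    rw [inner_sub_right] at h1
    have : (0:ℝ) < ‖v‖^2 := pow_pos (norm_pos_iff.mpr hvne) 2
    linarith

lemma haQ (hQ : Q = convexHull ℝ (insert a S)) : a ∈ Q :=
  hQ ▸ subset_convexHull ℝ _ (mem_insert a S)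

lemma hBQ (hQ : Q = convexHull ℝ (insert a S)) (hB : B = convexHull ℝ S) : B ⊆ Q := by
  rw [hQ, hB]; exact convexHull_mono (subset_insert a S)

lemma hQconv (hQ : Q = convexHull ℝ (insert a S)) : Convex ℝ Q :=
  hQ ▸ convex_convexHull ℝ _

lemma decomp (hQ : Q = convexHull ℝ (insert a S)) (hB : B = convexHull ℝ S)
    (hBne : B.Nonempty) {x : EuclideanSpace ℝ (Fin d)} (hx : x ∈ Q) :
    ∃ b ∈ B, ∃ t : ℝ, 0 ≤ t ∧ t ≤ 1 ∧ x = (1-t) • b + t • a := by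
  have hSne : S.Nonempty := by rwa [hB, convexHull_nonempty_iff] at hBne
  rw [hQ, convexHull_insert hSne, mem_convexJoin] at hx
  obtain ⟨q, hq, b, hb, hseg⟩ := hx
  rw [mem_singleton_iff] at hq
  subst hq
  rw [segment_eq_image] at hseg
  obtain ⟨θ, hθ, rfl⟩ := hseg
  refine ⟨b, hB ▸ hb, 1-θ, by linarith [hθ.2], by linarith [hθ.1], by module⟩

lemma comb_val (l : EuclideanSpace ℝ (Fin d) →L[ℝ] ℝ) (t : ℝ) (b : EuclideanSpace ℝ (Fin d)) :
    l ((1-t) • b + t • a) = (1-t) * l b + t * l a := by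
  simp [map_add, map_smul, smul_eq_mul]

lemma lower (hQ : Q = convexHull ℝ (insert a S)) (hB : B = convexHull ℝ S)
    (hBne : B.Nonempty) (hℓB : ∀ x ∈ B, ℓ x = c) (hℓa : c < ℓ a)
    {x : EuclideanSpace ℝ (Fin d)} (hx : x ∈ Q) : c ≤ ℓ x := by
  obtain ⟨b, hb, t, ht0, ht1, rfl⟩ := decomp hQ hB hBne hx
  rw [comb_val, hℓB b hb]
  nlinarith

lemma upper (hQ : Q = convexHull ℝ (insert a S)) (hB : B = convexHull ℝ S)
    (hBne : B.Nonempty) (hℓB : ∀ x ∈ B, ℓ x = c) (hℓa : c < ℓ a)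
    {x : EuclideanSpace ℝ (Fin d)} (hx : x ∈ Q) : ℓ x ≤ ℓ a := by
  obtain ⟨b, hb, t, ht0, ht1, rfl⟩ := decomp hQ hB hBne hx
  rw [comb_val, hℓB b hb]
  nlinarith

lemma level (hQ : Q = convexHull ℝ (insert a S)) (hB : B = convexHull ℝ S)
    (hBne : B.Nonempty) (hℓB : ∀ x ∈ B, ℓ x = c) (hℓa : c < ℓ a)
    {x : EuclideanSpace ℝ (Fin d)} (hx : x ∈ Q) (hxc : ℓ x = c) : x ∈ B := by
  obtain ⟨b, hb, t, ht0, ht1, rfl⟩ := decomp hQ hB hBne hx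
  rw [comb_val, hℓB b hb] at hxc
  have ht : t = 0 := by nlinarith
  subst ht
  simpa using hb

lemma apex_eq (hQ : Q = convexHull ℝ (insert a S)) (hB : B = convexHull ℝ S)
    (hBne : B.Nonempty) (hℓB : ∀ x ∈ B, ℓ x = c) (hℓa : c < ℓ a)
    {x : EuclideanSpace ℝ (Fin d)} (hx : x ∈ Q) (hxc : ℓ x = ℓ a) : x = a := by
  obtain ⟨b, hb, t, ht0, ht1, rfl⟩ := decomp hQ hB hBne hx
  rw [comb_val, hℓB b hb] at hxc
  have ht : t = 1 := by nlinarith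
  subst ht
  simp

/-- An exposed face not containing the apex is contained in the base. -/
lemma face_sub (hQ : Q = convexHull ℝ (insert a S)) (hB : B = convexHull ℝ S)
    (hBne : B.Nonempty) (hℓB : ∀ x ∈ B, ℓ x = c) (hℓa : c < ℓ a)
    {G : Set (EuclideanSpace ℝ (Fin d))} (hG : IsExposed ℝ Q G) (haG : a ∉ G) : G ⊆ B := by
  rcases G.eq_empty_or_nonempty with rfl | hGne
  · exact empty_subset _
  obtain ⟨l, rfl⟩ := hG hGne
  rintro x ⟨hxQ, hxmax⟩
  obtain ⟨b, hb, t, ht0, ht1, rfl⟩ := decomp hQ hB hBne hxQ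
  by_cases htz : t = 0
  · subst htz; simpa using hb
  have htpos : 0 < t := lt_of_le_of_ne ht0 (Ne.symm htz)
  have hbQ : b ∈ Q := hBQ hQ hB hb
  have haQ' : a ∈ Q := haQ hQ
  have h1 : l b ≤ l ((1-t) • b + t • a) := hxmax b hbQ
  have h2 : l a ≤ l ((1-t) • b + t • a) := hxmax a haQ'
  rw [comb_val] at h1 h2
  have hla : l a = l ((1-t) • b + t • a) := by
    rw [comb_val]; nlinarith
  exact absurd ⟨haQ', fun y hy => hla ▸ hxmax y hy⟩ haG

/-- Intersecting an exposed face with the base gives an exposed face. -/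
lemma face_cap (hQ : Q = convexHull ℝ (insert a S)) (hB : B = convexHull ℝ S)
    (hBne : B.Nonempty) (hℓB : ∀ x ∈ B, ℓ x = c) (hℓa : c < ℓ a)
    {G : Set (EuclideanSpace ℝ (Fin d))} (hG : IsExposed ℝ Q G) :
    IsExposed ℝ Q (G ∩ B) := by
  rcases (G ∩ B).eq_empty_or_nonempty with h | hne
  · rw [h]; exact isExposed_empty
  obtain ⟨g, hgG, hgB⟩ := id hne
  obtain ⟨l, rfl⟩ := hG ⟨g, hgG⟩
  intro _
  refine ⟨l - ℓ, ?_⟩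
  obtain ⟨hgQ, hgmax⟩ := hgG
  have hgc : ℓ g = c := hℓB g hgB
  ext x
  simp only [mem_inter_iff, mem_setOf_eq, ContinuousLinearMap.sub_apply]
  constructor
  · rintro ⟨⟨hxQ, hxmax⟩, hxB⟩
    refine ⟨hxQ, fun y hy => ?_⟩
    have h1 := hxmax y hy
    have hxc : ℓ x = c := hℓB x hxB
    have hyc : c ≤ ℓ y := lower hQ hB hBne hℓB hℓa hy
    linarith
  · rintro ⟨hxQ, hxmax⟩
    have h1 := hxmax g hgQ
    have h2 := hgmax x hxQ
    have h3 : c ≤ ℓ x := lower hQ hB hBne hℓB hℓa hxQ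
    have hxc : ℓ x = c := by linarith
    have hlx : l x = l g := by linarith
    exact ⟨⟨hxQ, fun y hy => hlx ▸ hgmax y hy⟩, level hQ hB hBne hℓB hℓa hxQ hxc⟩

/-- An exposed face containing the apex is the pyramid over its intersection with the base. -/
lemma face_rec (hQ : Q = convexHull ℝ (insert a S)) (hB : B = convexHull ℝ S)
    (hBne : B.Nonempty) (hℓB : ∀ x ∈ B, ℓ x = c) (hℓa : c < ℓ a)
    {G : Set (EuclideanSpace ℝ (Fin d))} (hG : IsExposed ℝ Q G) (haG : a ∈ G) :
    G = convexHull ℝ (insert a (G ∩ B)) := by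
  have hGconv : Convex ℝ G := hG.convex (hQconv hQ)
  obtain ⟨l, hGeq⟩ := hG ⟨a, haG⟩
  apply Subset.antisymm
  · intro x hxG
    have hxQ : x ∈ Q := by rw [hGeq] at hxG; exact hxG.1
    obtain ⟨b, hb, t, ht0, ht1, hxe⟩ := decomp hQ hB hBne hxQ
    by_cases ht1' : t = 1
    · subst ht1'
      have : x = a := by rw [hxe]; simp
      rw [this]
      exact subset_convexHull ℝ _ (mem_insert _ _)
    have htlt : t < 1 := lt_of_le_of_ne ht1 ht1'
    have hbQ : b ∈ Q := hBQ hQ hB hb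
    have haQ' : a ∈ Q := haQ hQ
    have hbG : b ∈ G := by
      rw [hGeq] at hxG ⊢
      obtain ⟨_, hxmax⟩ := hxG
      have h1 : l b ≤ l x := hxmax b hbQ
      have h2 : l a ≤ l x := hxmax a haQ'
      have h3 : l x = (1-t) * l b + t * l a := by rw [hxe, comb_val]
      have hlb : l b = l x := by nlinarith
      exact ⟨hbQ, fun y hy => hlb ▸ hxmax y hy⟩
    have hbm : b ∈ convexHull ℝ (insert a (G ∩ B)) :=
      subset_convexHull ℝ _ (mem_insert_of_mem _ ⟨hbG, hb⟩)
    have ham : a ∈ convexHull ℝ (insert a (G ∩ B)) :=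
      subset_convexHull ℝ _ (mem_insert _ _)
    rw [hxe]
    exact (convex_convexHull ℝ _) hbm ham (by linarith) ht0 (by ring)
  · exact convexHull_min (insert_subset haG inter_subset_left) hGconv

/-- The pyramid over an exposed face of the base is an exposed face. -/
lemma face_pyr (hQ : Q = convexHull ℝ (insert a S)) (hB : B = convexHull ℝ S)
    (hBne : B.Nonempty) (hℓB : ∀ x ∈ B, ℓ x = c) (hℓa : c < ℓ a) (haB' : a ∉ B)
    {F : Set (EuclideanSpace ℝ (Fin d))} (hF : IsExposed ℝ Q F) (hFB : F ⊆ B) :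
    IsExposed ℝ Q (convexHull ℝ (insert a F)) := by
  have hFconv : Convex ℝ F := hF.convex (hQconv hQ)
  intro _
  rcases F.eq_empty_or_nonempty with rfl | hFne
  · refine ⟨ℓ, ?_⟩
    rw [show insert a (∅ : Set (EuclideanSpace ℝ (Fin d))) = {a} by simp, convexHull_singleton]
    ext x
    simp only [mem_singleton_iff, mem_setOf_eq]
    constructor
    · rintro rfl
      exact ⟨haQ hQ, fun y hy => upper hQ hB hBne hℓB hℓa hy⟩
    · rintro ⟨hxQ, hxmax⟩
      have h1 : ℓ a ≤ ℓ x := hxmax a (haQ hQ)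
      have h2 : ℓ x ≤ ℓ a := upper hQ hB hBne hℓB hℓa hxQ
      exact apex_eq hQ hB hBne hℓB hℓa hxQ (le_antisymm h2 h1)
  obtain ⟨f₀, hf₀⟩ := id hFne
  obtain ⟨l, hFeq⟩ := hF hFne
  set m := l f₀ with hm
  have hf₀' : f₀ ∈ {x ∈ Q | ∀ y ∈ Q, l y ≤ l x} := hFeq ▸ hf₀
  have hf₀Q : f₀ ∈ Q := hf₀'.1
  have hmax : ∀ y ∈ Q, l y ≤ m := hf₀'.2
  have hFval : ∀ f ∈ F, l f = m := by
    intro f hf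
    have hf' : f ∈ {x ∈ Q | ∀ y ∈ Q, l y ≤ l x} := hFeq ▸ hf
    exact le_antisymm (hmax f hf'.1) (hf'.2 f₀ hf₀Q)
  have haQ' : a ∈ Q := haQ hQ
  have hla : l a < m := by
    rcases lt_or_eq_of_le (hmax a haQ') with h | h
    · exact h
    · exfalso
      have : a ∈ F := by
        rw [hFeq]
        exact ⟨haQ', fun y hy => h ▸ hmax y hy⟩
      exact haB' (hFB this)
  have hΔ : 0 < ℓ a - c := by linarith
  set μ := (m - l a) / (ℓ a - c) with hμdef
  have hμ : μ * (ℓ a - c) = m - l a := div_mul_cancel₀ _ (ne_of_gt hΔ)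
  have hμ0 : 0 ≤ μ := div_nonneg (by linarith) (by linarith)
  set M := m + μ * c with hM
  have hval : ∀ x : EuclideanSpace ℝ (Fin d),
      (l + μ • ℓ) x = l x + μ * ℓ x := fun x => by
    simp [ContinuousLinearMap.add_apply, ContinuousLinearMap.smul_apply, smul_eq_mul]
  have hbound : ∀ y ∈ Q, l y + μ * ℓ y ≤ M := by
    intro y hy
    obtain ⟨b, hb, t, ht0, ht1, rfl⟩ := decomp hQ hB hBne hy
    rw [comb_val, comb_val, hℓB b hb]
    have hlb : l b ≤ m := hmax b (hBQ hQ hB hb)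
    nlinarith [mul_nonneg ht0 hμ0, mul_nonneg (sub_nonneg.2 ht1) (sub_nonneg.2 hlb)]
  have haM : l a + μ * ℓ a = M := by
    rw [hM]; nlinarith
  refine ⟨l + μ • ℓ, ?_⟩
  ext x
  simp only [mem_setOf_eq, hval]
  constructor
  · intro hx
    rw [convexHull_insert hFne, mem_convexJoin] at hx
    obtain ⟨q, hq, b, hb, hseg⟩ := hx
    rw [mem_singleton_iff] at hq
    rw [hq] at hseg
    rw [hFconv.convexHull_eq] at hb
    rw [segment_eq_image] at hseg
    obtain ⟨θ, hθ, rfl⟩ := hseg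
    have hbB : b ∈ B := hFB hb
    have hbQ : b ∈ Q := hBQ hQ hB hbB
    have hxQ : (1-θ) • a + θ • b ∈ Q :=
      (hQconv hQ) haQ' hbQ (by linarith [hθ.2]) hθ.1 (by ring)
    have hxval : l ((1-θ) • a + θ • b) + μ * ℓ ((1-θ) • a + θ • b) = M := by
      simp only [map_add, map_smul, smul_eq_mul]
      rw [hFval b hb, hℓB b hbB]
      linear_combination (1 - θ) * hμ - hM
    refine ⟨hxQ, fun y hy => ?_⟩
    rw [hxval]
    exact hbound y hy
  · rintro ⟨hxQ, hxmax⟩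
    have h1 : l a + μ * ℓ a ≤ l x + μ * ℓ x := hxmax a haQ'
    have h2 : l x + μ * ℓ x ≤ M := hbound x hxQ
    have hxM : l x + μ * ℓ x = M := by rw [← haM] at h2 ⊢; linarith
    obtain ⟨b, hb, t, ht0, ht1, rfl⟩ := decomp hQ hB hBne hxQ
    rw [comb_val, comb_val, hℓB b hb] at hxM
    by_cases ht1' : t = 1
    · subst ht1'
      have : (1-(1:ℝ)) • b + (1:ℝ) • a = a := by simp
      rw [this]
      exact subset_convexHull ℝ _ (mem_insert _ _)
    have htlt : t < 1 := lt_of_le_of_ne ht1 ht1'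
    have hlb : l b = m := by
      have hlb' : l b ≤ m := hmax b (hBQ hQ hB hb)
      nlinarith
    have hbF : b ∈ F := by
      rw [hFeq]
      exact ⟨hBQ hQ hB hb, fun y hy => hlb ▸ hmax y hy⟩
    have hbm : b ∈ convexHull ℝ (insert a F) :=
      subset_convexHull ℝ _ (mem_insert_of_mem _ hbF)
    have ham : a ∈ convexHull ℝ (insert a F) :=
      subset_convexHull ℝ _ (mem_insert _ _)
    exact (convex_convexHull ℝ _) hbm ham (by linarith) ht0 (by ring)

/-- The pyramid over a face of the base meets the base exactly in that face. -/
lemma pyr_int (hQ : Q = convexHull ℝ (insert a S)) (hB : B = convexHull ℝ S)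
    (hBne : B.Nonempty) (hℓB : ∀ x ∈ B, ℓ x = c) (hℓa : c < ℓ a) (haB' : a ∉ B)
    {F : Set (EuclideanSpace ℝ (Fin d))} (hFconv : Convex ℝ F) (hFB : F ⊆ B) :
    convexHull ℝ (insert a F) ∩ B = F := by
  apply Subset.antisymm
  · rintro x ⟨hx1, hxB⟩
    rcases F.eq_empty_or_nonempty with rfl | hFne
    · rw [show insert a (∅ : Set (EuclideanSpace ℝ (Fin d))) = {a} by simp,
        convexHull_singleton, mem_singleton_iff] at hx1
      exact absurd (hx1 ▸ hxB) haB'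
    rw [convexHull_insert hFne, mem_convexJoin] at hx1
    obtain ⟨q, hq, b, hb, hseg⟩ := hx1
    rw [mem_singleton_iff] at hq
    rw [hq] at hseg
    rw [hFconv.convexHull_eq] at hb
    rw [segment_eq_image] at hseg
    obtain ⟨θ, hθ, rfl⟩ := hseg
    have hbB : b ∈ B := hFB hb
    have hxc : ℓ ((1-θ) • a + θ • b) = c := hℓB _ hxB
    rw [map_add, map_smul, map_smul, smul_eq_mul, smul_eq_mul, hℓB b hbB] at hxc
    have hθ1 : θ = 1 := by nlinarith [hθ.2]
    subst hθ1
    simpa using hb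
  · exact subset_inter ((subset_insert a F).trans (subset_convexHull ℝ _)) hFB

end Stmt2Aux

/-- For a pyramid `Q` with apex `a` over base `B = convexHull ℝ S`
(`a ∉ affineSpan ℝ S`), the number of exposed faces of `Q` contained in `B` equals
the number of exposed faces of `Q` not contained in `B`. -/
theorem stmt_2 {d : ℕ} (S : Set (EuclideanSpace ℝ (Fin d))) (hS : S.Finite)
    (a : EuclideanSpace ℝ (Fin d)) (ha : a ∉ affineSpan ℝ S)
    (Q B : Set (EuclideanSpace ℝ (Fin d)))
    (hQ : Q = convexHull ℝ (insert a S)) (hB : B = convexHull ℝ S) :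
    Set.ncard {G : Set (EuclideanSpace ℝ (Fin d)) | IsExposed ℝ Q G ∧ G ⊆ B} =
      Set.ncard {G : Set (EuclideanSpace ℝ (Fin d)) | IsExposed ℝ Q G ∧ ¬ G ⊆ B} := by
  classical
  open Stmt2Aux in
  rcases S.eq_empty_or_nonempty with rfl | hSne
  · have hB' : B = ∅ := by simpa using hB
    have hQ' : Q = {a} := by simpa using hQ
    subst hB'
    subst hQ'
    have hL : {G : Set (EuclideanSpace ℝ (Fin d)) | IsExposed ℝ {a} G ∧ G ⊆ (∅ : Set _)} =
        {(∅ : Set (EuclideanSpace ℝ (Fin d)))} := by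
      ext G
      simp only [Set.mem_setOf_eq, Set.subset_empty_iff, Set.mem_singleton_iff]
      exact ⟨fun h => h.2, fun h => ⟨h ▸ isExposed_empty, h⟩⟩
    have hR : {G : Set (EuclideanSpace ℝ (Fin d)) | IsExposed ℝ {a} G ∧ ¬ G ⊆ (∅ : Set _)} =
        {({a} : Set (EuclideanSpace ℝ (Fin d)))} := by
      ext G
      simp only [Set.mem_setOf_eq, Set.subset_empty_iff, Set.mem_singleton_iff]
      constructor
      · rintro ⟨hG, hne⟩
        exact (Set.subset_singleton_iff_eq.1 hG.subset).resolve_left hne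
      · rintro rfl
        exact ⟨IsExposed.refl _, Set.singleton_ne_empty a⟩
    rw [hL, hR, Set.ncard_singleton, Set.ncard_singleton]
  · obtain ⟨ℓ, c, hℓspan, hℓa⟩ := exists_functional S hSne a ha
    have hℓB : ∀ x ∈ B, ℓ x = c := fun x hx =>
      hℓspan x (convexHull_subset_affineSpan S (hB ▸ hx))
    have hBne : B.Nonempty := by rw [hB, convexHull_nonempty_iff]; exact hSne
    have haB' : a ∉ B := fun h => ha (convexHull_subset_affineSpan S (hB ▸ h))
    have hinj : Set.InjOn (fun F => convexHull ℝ (insert a F))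
        {G : Set (EuclideanSpace ℝ (Fin d)) | IsExposed ℝ Q G ∧ G ⊆ B} := by
      rintro F₁ ⟨hF₁, hF₁B⟩ F₂ ⟨hF₂, hF₂B⟩ h
      have e1 := pyr_int hQ hB hBne hℓB hℓa haB' (hF₁.convex (hQconv hQ)) hF₁B
      have e2 := pyr_int hQ hB hBne hℓB hℓa haB' (hF₂.convex (hQconv hQ)) hF₂B
      rw [← e1, ← e2]
      simp only at h
      rw [h]
    have himg : (fun F => convexHull ℝ (insert a F)) ''
        {G : Set (EuclideanSpace ℝ (Fin d)) | IsExposed ℝ Q G ∧ G ⊆ B} =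
        {G : Set (EuclideanSpace ℝ (Fin d)) | IsExposed ℝ Q G ∧ ¬ G ⊆ B} := by
      ext G
      constructor
      · rintro ⟨F, ⟨hF, hFB⟩, rfl⟩
        refine ⟨face_pyr hQ hB hBne hℓB hℓa haB' hF hFB, fun hsub => ?_⟩
        exact haB' (hsub (subset_convexHull ℝ _ (Set.mem_insert a F)))
      · rintro ⟨hG, hGB⟩
        have haG : a ∈ G := by
          by_contra h
          exact hGB (face_sub hQ hB hBne hℓB hℓa hG h)
        exact ⟨G ∩ B, ⟨face_cap hQ hB hBne hℓB hℓa hG, Set.inter_subset_right⟩,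
          (face_rec hQ hB hBne hℓB hℓa hG haG).symm⟩
    rw [← himg, Set.ncard_image_of_injOn hinj]
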